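/- The map (x,y) ↦ H(x,y) := ∇²_{xx}f(x,y) − ∇²_{xy}f(x,y)(∇²_{yy}f(x,y))⁻¹∇²_{yx}f(x,y) is Lipschitz continuous in the operator norm with constant L_H = ρ(1+κ)², and moreover ‖H(x,y)‖ ≤ (1+κ)ℓ for all (x,y), where κ = ℓ/μ. -/

import Mathlib

noncomputable section

open RealInnerProductSpace Topology Filter

/-- `ℝⁿ` as a Euclidean space. -/
abbrev En (n : ℕ) := EuclideanSpace ℝ (Fin n)

/-- The point `(x, y)` in the Euclidean (ℓ²) product `ℝⁿ × ℝᵐ`. -/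
def pair {n m : ℕ} (x : En n) (y : En m) : WithLp 2 (En n × En m) :=
  (WithLp.equiv 2 (En n × En m)).symm (x, y)

/-- Partial gradient `∇ₓ f(x, y)` with respect to the first variable. -/
def gradx {n m : ℕ} (f : WithLp 2 (En n × En m) → ℝ) (x : En n) (y : En m) : En n :=
  gradient (fun x' => f (pair x' y)) x

/-- Partial gradient `∇_y f(x, y)` with respect to the second variable. -/
def grady {n m : ℕ} (f : WithLp 2 (En n × En m) → ℝ) (x : En n) (y : En m) : En m :=
  gradient (fun y' => f (pair x y')) y

/-- Second-order partial derivative `∇²ₓₓ f(x, y)`. -/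
def Hxx {n m : ℕ} (f : WithLp 2 (En n × En m) → ℝ) (x : En n) (y : En m) : En n →L[ℝ] En n :=
  fderiv ℝ (fun x' => gradx f x' y) x

/-- Second-order partial derivative `∇²ₓ_y f(x, y)`. -/
def Hxy {n m : ℕ} (f : WithLp 2 (En n × En m) → ℝ) (x : En n) (y : En m) : En m →L[ℝ] En n :=
  fderiv ℝ (fun y' => gradx f x y') y

/-- Second-order partial derivative `∇²_yₓ f(x, y)`. -/
def Hyx {n m : ℕ} (f : WithLp 2 (En n × En m) → ℝ) (x : En n) (y : En m) : En n →L[ℝ] En m :=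
  fderiv ℝ (fun x' => grady f x' y) x

/-- Second-order partial derivative `∇²_y_y f(x, y)`. -/
def Hyy {n m : ℕ} (f : WithLp 2 (En n × En m) → ℝ) (x : En n) (y : En m) : En m →L[ℝ] En m :=
  fderiv ℝ (fun y' => grady f x y') y

/-- `H(x,y) = ∇²ₓₓf(x,y) − ∇²ₓ_yf(x,y) (∇²_y_yf(x,y))⁻¹ ∇²_yₓf(x,y)`. -/
def Hmat {n m : ℕ} (f : WithLp 2 (En n × En m) → ℝ) (x : En n) (y : En m) : En n →L[ℝ] En n :=
  Hxx f x y - (Hxy f x y).comp (((Hyy f x y).inverse).comp (Hyx f x y))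

/-- `P(x) = max_y f(x, y)` (as a supremum over `y`). -/
def Pmax {n m : ℕ} (f : WithLp 2 (En n × En m) → ℝ) (x : En n) : ℝ := ⨆ y, f (pair x y)

/-- The Hessian of `P` at `x`, as the derivative of the gradient map. -/
def hessP {n : ℕ} (P : En n → ℝ) (x : En n) : En n →L[ℝ] En n := fderiv ℝ (gradient P) x

section Aux
variable {n m : ℕ}

lemma pair_sub (x x' : En n) (y y' : En m) : pair x y - pair x' y' = pair (x - x') (y - y') := rfl

lemma pair_fst (x : En n) (y : En m) : (pair x y).fst = x := rfl
lemma pair_snd (x : En n) (y : En m) : (pair x y).snd = y := rfl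

lemma norm_pair_sq (x : En n) (y : En m) : ‖pair x y‖ ^ 2 = ‖x‖ ^ 2 + ‖y‖ ^ 2 := by
  rw [WithLp.prod_norm_sq_eq_of_L2]; rfl

lemma norm_pair_left (v : En n) : ‖pair v (0 : En m)‖ = ‖v‖ := by
  have := norm_pair_sq v (0 : En m)
  simp at this
  nlinarith [norm_nonneg (pair v (0:En m)), norm_nonneg v]

lemma norm_pair_right (w : En m) : ‖pair (0 : En n) w‖ = ‖w‖ := by
  have := norm_pair_sq (0 : En n) w
  simp at this
  nlinarith [norm_nonneg (pair (0:En n) w), norm_nonneg w]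

lemma pnorm_fst_le (p : WithLp 2 (En n × En m)) : ‖p.fst‖ ≤ ‖p‖ := by
  have h : ‖p‖ ^ 2 = ‖p.fst‖ ^ 2 + ‖p.snd‖ ^ 2 := WithLp.prod_norm_sq_eq_of_L2 p
  nlinarith [norm_nonneg p, norm_nonneg p.fst, norm_nonneg p.snd]

lemma pnorm_snd_le (p : WithLp 2 (En n × En m)) : ‖p.snd‖ ≤ ‖p‖ := by
  have h : ‖p‖ ^ 2 = ‖p.fst‖ ^ 2 + ‖p.snd‖ ^ 2 := WithLp.prod_norm_sq_eq_of_L2 p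
  nlinarith [norm_nonneg p, norm_nonneg p.fst, norm_nonneg p.snd]

lemma inner_pair (p : WithLp 2 (En n × En m)) (x : En n) (y : En m) :
    ⟪p, pair x y⟫ = ⟪p.fst, x⟫ + ⟪p.snd, y⟫ := by
  rw [WithLp.prod_inner_apply]; rfl

lemma inner_gradient {f : En n → ℝ} {x : En n} (v : En n) :
    ⟪gradient f x, v⟫ = fderiv ℝ f x v := by
  rw [gradient, InnerProductSpace.toDual_symm_apply]

end Aux

section Aux2
variable {n m : ℕ}

lemma inner_gradient' {F : Type*} [NormedAddCommGroup F] [InnerProductSpace ℝ F]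
    [CompleteSpace F] {f : F → ℝ} {x : F} (v : F) : ⟪gradient f x, v⟫ = fderiv ℝ f x v := by
  rw [gradient, InnerProductSpace.toDual_symm_apply]

/-- `v ↦ pair v 0` as a continuous linear map. -/
def inlP (n m : ℕ) : En n →L[ℝ] WithLp 2 (En n × En m) :=
  ((WithLp.prodContinuousLinearEquiv 2 ℝ (En n) (En m)).symm.toContinuousLinearMap).comp
    (ContinuousLinearMap.inl ℝ (En n) (En m))

def inrP (n m : ℕ) : En m →L[ℝ] WithLp 2 (En n × En m) :=
  ((WithLp.prodContinuousLinearEquiv 2 ℝ (En n) (En m)).symm.toContinuousLinearMap).comp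
    (ContinuousLinearMap.inr ℝ (En n) (En m))

def fstL (n m : ℕ) : WithLp 2 (En n × En m) →L[ℝ] En n :=
  (ContinuousLinearMap.fst ℝ (En n) (En m)).comp
    (WithLp.prodContinuousLinearEquiv 2 ℝ (En n) (En m)).toContinuousLinearMap

def sndL (n m : ℕ) : WithLp 2 (En n × En m) →L[ℝ] En m :=
  (ContinuousLinearMap.snd ℝ (En n) (En m)).comp
    (WithLp.prodContinuousLinearEquiv 2 ℝ (En n) (En m)).toContinuousLinearMap

@[simp] lemma inlP_apply (v : En n) : inlP n m v = pair v 0 := rfl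
@[simp] lemma inrP_apply (w : En m) : inrP n m w = pair 0 w := rfl
@[simp] lemma fstL_apply (p : WithLp 2 (En n × En m)) : fstL n m p = p.fst := rfl
@[simp] lemma sndL_apply (p : WithLp 2 (En n × En m)) : sndL n m p = p.snd := rfl

lemma pair_eq_add (x : En n) (y : En m) : pair x y = pair x 0 + pair 0 y := by
  apply (WithLp.equiv 2 (En n × En m)).injective
  simp [pair, Prod.ext_iff]

end Aux2

section Calc
variable {n m : ℕ} {f : WithLp 2 (En n × En m) → ℝ}



lemma g_contDiff (hf : ContDiff ℝ 2 f) : ContDiff ℝ 1 (gradient f) := by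
  have h1 : ContDiff ℝ 1 (fderiv ℝ f) := hf.fderiv_right (by norm_num)
  exact ((InnerProductSpace.toDual ℝ (WithLp 2 (En n × En m))).symm.contDiff).comp h1

lemma pair_left_hasFDerivAt (x : En n) (y : En m) :
    HasFDerivAt (fun x' => pair x' y) (inlP n m) x := by
  have : (fun x' : En n => pair x' y) = fun x' => inlP n m x' + pair 0 y := by
    funext x'; rw [inlP_apply, ← pair_eq_add]
  rw [this]
  exact (inlP n m).hasFDerivAt.add_const _

lemma pair_right_hasFDerivAt (x : En n) (y : En m) :
    HasFDerivAt (fun y' => pair x y') (inrP n m) y := by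
  have : (fun y' : En m => pair x y') = fun y' => inrP n m y' + pair x 0 := by
    funext y'; rw [inrP_apply]; rw [pair_eq_add x y']; abel
  rw [this]
  exact (inrP n m).hasFDerivAt.add_const _

lemma gradx_eq (hf : ContDiff ℝ 2 f) (x : En n) (y : En m) :
    gradx f x y = fstL n m (gradient f (pair x y)) := by
  have hdf := ((hf.differentiable (by norm_num)) (pair x y)).hasFDerivAt
  have hcomp : HasFDerivAt (fun x' => f (pair x' y))
      ((fderiv ℝ f (pair x y)).comp (inlP n m)) x :=
    hdf.comp x (pair_left_hasFDerivAt x y)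
  apply ext_inner_right ℝ
  intro v
  rw [gradx, inner_gradient', hcomp.fderiv]
  have : ⟪gradient f (pair x y), pair v 0⟫ = fderiv ℝ f (pair x y) (pair v 0) :=
    inner_gradient' _
  rw [inner_pair] at this
  simp only [ContinuousLinearMap.coe_comp', Function.comp_apply, inlP_apply, fstL_apply]
  rw [← this]; simp

lemma grady_eq (hf : ContDiff ℝ 2 f) (x : En n) (y : En m) :
    grady f x y = sndL n m (gradient f (pair x y)) := by
  have hdf := ((hf.differentiable (by norm_num)) (pair x y)).hasFDerivAt
  have hcomp : HasFDerivAt (fun y' => f (pair x y'))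
      ((fderiv ℝ f (pair x y)).comp (inrP n m)) y :=
    hdf.comp y (pair_right_hasFDerivAt x y)
  apply ext_inner_right ℝ
  intro v
  rw [grady, inner_gradient', hcomp.fderiv]
  have : ⟪gradient f (pair x y), pair 0 v⟫ = fderiv ℝ f (pair x y) (pair 0 v) :=
    inner_gradient' _
  rw [inner_pair] at this
  simp only [ContinuousLinearMap.coe_comp', Function.comp_apply, inrP_apply, sndL_apply]
  rw [← this]; simp

end Calc


section Calc2
variable {n m : ℕ} {f : WithLp 2 (En n × En m) → ℝ}

lemma hasFDerivAt_Hxx (hf : ContDiff ℝ 2 f) (x : En n) (y : En m) :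
    HasFDerivAt (fun x' => gradx f x' y)
      ((fstL n m).comp ((fderiv ℝ (gradient f) (pair x y)).comp (inlP n m))) x := by
  have hg := ((g_contDiff hf).differentiable one_ne_zero (pair x y)).hasFDerivAt
  have : (fun x' => gradx f x' y) = fun x' => fstL n m (gradient f (pair x' y)) := by
    funext x'; exact gradx_eq hf x' y
  rw [this]
  exact (fstL n m).hasFDerivAt.comp x (HasFDerivAt.comp (g := gradient f) x hg (pair_left_hasFDerivAt x y))

lemma hasFDerivAt_Hxy (hf : ContDiff ℝ 2 f) (x : En n) (y : En m) :
    HasFDerivAt (fun y' => gradx f x y')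
      ((fstL n m).comp ((fderiv ℝ (gradient f) (pair x y)).comp (inrP n m))) y := by
  have hg := ((g_contDiff hf).differentiable one_ne_zero (pair x y)).hasFDerivAt
  have : (fun y' => gradx f x y') = fun y' => fstL n m (gradient f (pair x y')) := by
    funext y'; exact gradx_eq hf x y'
  rw [this]
  exact (fstL n m).hasFDerivAt.comp y (hg.comp y (pair_right_hasFDerivAt x y))

lemma hasFDerivAt_Hyx (hf : ContDiff ℝ 2 f) (x : En n) (y : En m) :
    HasFDerivAt (fun x' => grady f x' y)
      ((sndL n m).comp ((fderiv ℝ (gradient f) (pair x y)).comp (inlP n m))) x := by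
  have hg := ((g_contDiff hf).differentiable one_ne_zero (pair x y)).hasFDerivAt
  have : (fun x' => grady f x' y) = fun x' => sndL n m (gradient f (pair x' y)) := by
    funext x'; exact grady_eq hf x' y
  rw [this]
  exact (sndL n m).hasFDerivAt.comp x (HasFDerivAt.comp (g := gradient f) x hg (pair_left_hasFDerivAt x y))

lemma hasFDerivAt_Hyy (hf : ContDiff ℝ 2 f) (x : En n) (y : En m) :
    HasFDerivAt (fun y' => grady f x y')
      ((sndL n m).comp ((fderiv ℝ (gradient f) (pair x y)).comp (inrP n m))) y := by
  have hg := ((g_contDiff hf).differentiable one_ne_zero (pair x y)).hasFDerivAt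
  have : (fun y' => grady f x y') = fun y' => sndL n m (gradient f (pair x y')) := by
    funext y'; exact grady_eq hf x y'
  rw [this]
  exact (sndL n m).hasFDerivAt.comp y (hg.comp y (pair_right_hasFDerivAt x y))

lemma Hxx_eq (hf : ContDiff ℝ 2 f) (x : En n) (y : En m) :
    Hxx f x y = (fstL n m).comp ((fderiv ℝ (gradient f) (pair x y)).comp (inlP n m)) :=
  (hasFDerivAt_Hxx hf x y).fderiv
lemma Hxy_eq (hf : ContDiff ℝ 2 f) (x : En n) (y : En m) :
    Hxy f x y = (fstL n m).comp ((fderiv ℝ (gradient f) (pair x y)).comp (inrP n m)) :=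
  (hasFDerivAt_Hxy hf x y).fderiv
lemma Hyx_eq (hf : ContDiff ℝ 2 f) (x : En n) (y : En m) :
    Hyx f x y = (sndL n m).comp ((fderiv ℝ (gradient f) (pair x y)).comp (inlP n m)) :=
  (hasFDerivAt_Hyx hf x y).fderiv
lemma Hyy_eq (hf : ContDiff ℝ 2 f) (x : En n) (y : En m) :
    Hyy f x y = (sndL n m).comp ((fderiv ℝ (gradient f) (pair x y)).comp (inrP n m)) :=
  (hasFDerivAt_Hyy hf x y).fderiv

end Calc2

section Bounds
variable {n m : ℕ} {f : WithLp 2 (En n × En m) → ℝ} {ℓ : ℝ}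

lemma norm_comp_fst_inl (A : WithLp 2 (En n × En m) →L[ℝ] WithLp 2 (En n × En m)) :
    ‖(fstL n m).comp (A.comp (inlP n m))‖ ≤ ‖A‖ := by
  refine ContinuousLinearMap.opNorm_le_bound _ (norm_nonneg A) fun v => ?_
  calc ‖(fstL n m) (A (inlP n m v))‖ ≤ ‖A (inlP n m v)‖ := pnorm_fst_le _
    _ ≤ ‖A‖ * ‖inlP n m v‖ := A.le_opNorm _
    _ = ‖A‖ * ‖v‖ := by rw [inlP_apply, norm_pair_left]

lemma norm_comp_fst_inr (A : WithLp 2 (En n × En m) →L[ℝ] WithLp 2 (En n × En m)) :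
    ‖(fstL n m).comp (A.comp (inrP n m))‖ ≤ ‖A‖ := by
  refine ContinuousLinearMap.opNorm_le_bound _ (norm_nonneg A) fun v => ?_
  calc ‖(fstL n m) (A (inrP n m v))‖ ≤ ‖A (inrP n m v)‖ := pnorm_fst_le _
    _ ≤ ‖A‖ * ‖inrP n m v‖ := A.le_opNorm _
    _ = ‖A‖ * ‖v‖ := by rw [inrP_apply, norm_pair_right]

lemma norm_comp_snd_inl (A : WithLp 2 (En n × En m) →L[ℝ] WithLp 2 (En n × En m)) :
    ‖(sndL n m).comp (A.comp (inlP n m))‖ ≤ ‖A‖ := by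
  refine ContinuousLinearMap.opNorm_le_bound _ (norm_nonneg A) fun v => ?_
  calc ‖(sndL n m) (A (inlP n m v))‖ ≤ ‖A (inlP n m v)‖ := pnorm_snd_le _
    _ ≤ ‖A‖ * ‖inlP n m v‖ := A.le_opNorm _
    _ = ‖A‖ * ‖v‖ := by rw [inlP_apply, norm_pair_left]

lemma norm_comp_snd_inr (A : WithLp 2 (En n × En m) →L[ℝ] WithLp 2 (En n × En m)) :
    ‖(sndL n m).comp (A.comp (inrP n m))‖ ≤ ‖A‖ := by
  refine ContinuousLinearMap.opNorm_le_bound _ (norm_nonneg A) fun v => ?_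
  calc ‖(sndL n m) (A (inrP n m v))‖ ≤ ‖A (inrP n m v)‖ := pnorm_snd_le _
    _ ≤ ‖A‖ * ‖inrP n m v‖ := A.le_opNorm _
    _ = ‖A‖ * ‖v‖ := by rw [inrP_apply, norm_pair_right]

lemma norm_fderiv_g_le (hℓ : 0 ≤ ℓ)
    (hlip : ∀ p q : WithLp 2 (En n × En m), ‖gradient f p - gradient f q‖ ≤ ℓ * ‖p - q‖)
    (p : WithLp 2 (En n × En m)) : ‖fderiv ℝ (gradient f) p‖ ≤ ℓ := by
  have hL : LipschitzWith ⟨ℓ, hℓ⟩ (gradient f) := by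
    apply LipschitzWith.of_dist_le_mul
    intro a b
    rw [dist_eq_norm, dist_eq_norm]
    exact hlip a b
  exact norm_fderiv_le_of_lipschitz ℝ hL

lemma norm_Hxx_le (hf : ContDiff ℝ 2 f) (hℓ : 0 ≤ ℓ)
    (hlip : ∀ p q : WithLp 2 (En n × En m), ‖gradient f p - gradient f q‖ ≤ ℓ * ‖p - q‖)
    (x : En n) (y : En m) : ‖Hxx f x y‖ ≤ ℓ := by
  rw [Hxx_eq hf]
  exact (norm_comp_fst_inl _).trans (norm_fderiv_g_le hℓ hlip _)

lemma norm_Hxy_le (hf : ContDiff ℝ 2 f) (hℓ : 0 ≤ ℓ)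
    (hlip : ∀ p q : WithLp 2 (En n × En m), ‖gradient f p - gradient f q‖ ≤ ℓ * ‖p - q‖)
    (x : En n) (y : En m) : ‖Hxy f x y‖ ≤ ℓ := by
  rw [Hxy_eq hf]
  exact (norm_comp_fst_inr _).trans (norm_fderiv_g_le hℓ hlip _)

lemma norm_Hyx_le (hf : ContDiff ℝ 2 f) (hℓ : 0 ≤ ℓ)
    (hlip : ∀ p q : WithLp 2 (En n × En m), ‖gradient f p - gradient f q‖ ≤ ℓ * ‖p - q‖)
    (x : En n) (y : En m) : ‖Hyx f x y‖ ≤ ℓ := by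
  rw [Hyx_eq hf]
  exact (norm_comp_snd_inl _).trans (norm_fderiv_g_le hℓ hlip _)

lemma norm_Hyy_le (hf : ContDiff ℝ 2 f) (hℓ : 0 ≤ ℓ)
    (hlip : ∀ p q : WithLp 2 (En n × En m), ‖gradient f p - gradient f q‖ ≤ ℓ * ‖p - q‖)
    (x : En n) (y : En m) : ‖Hyy f x y‖ ≤ ℓ := by
  rw [Hyy_eq hf]
  exact (norm_comp_snd_inr _).trans (norm_fderiv_g_le hℓ hlip _)

end Bounds

section Mono
variable {n m : ℕ} {f : WithLp 2 (En n × En m) → ℝ} {μ : ℝ}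

lemma phi_diffAt (hf : ContDiff ℝ 2 f) (x : En n) (y : En m) :
    DifferentiableAt ℝ (fun y' => f (pair x y')) y :=
  ((hf.differentiable (by norm_num)) (pair x y)).comp y
    (pair_right_hasFDerivAt x y).differentiableAt

lemma line_hasDerivAt (b v : En m) (t : ℝ) :
    HasDerivAt (fun s : ℝ => b + s • v) v t := by
  simpa using ((hasDerivAt_id t).smul_const v).const_add b

lemma phi_line_hasDerivAt (hf : ContDiff ℝ 2 f) (x : En n) (b v : En m) (t : ℝ) :
    HasDerivAt (fun s : ℝ => f (pair x (b + s • v)))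
      ⟪grady f x (b + t • v), v⟫ t := by
  have hd := (phi_diffAt hf x (b + t • v)).hasFDerivAt
  have h1 := hd.comp_hasDerivAt t (line_hasDerivAt b v t)
  have : fderiv ℝ (fun y' => f (pair x y')) (b + t • v) v
      = ⟪grady f x (b + t • v), v⟫ := (inner_gradient' v).symm
  rwa [this] at h1

lemma normsq_line_hasDerivAt (μ : ℝ) (b v : En m) (t : ℝ) :
    HasDerivAt (fun s : ℝ => μ / 2 * ‖b + s • v‖ ^ 2)
      (μ * ⟪b + t • v, v⟫) t := by
  have h1 : HasDerivAt (fun s : ℝ => ⟪b + s • v, b + s • v⟫)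
      (⟪b + t • v, v⟫ + ⟪v, b + t • v⟫) t :=
    HasDerivAt.inner ℝ (line_hasDerivAt b v t) (line_hasDerivAt b v t)
  have h2 : (fun s : ℝ => μ / 2 * ‖b + s • v‖ ^ 2)
      = fun s : ℝ => μ / 2 * ⟪b + s • v, b + s • v⟫ := by
    funext s; rw [real_inner_self_eq_norm_sq]
  rw [h2]
  have := h1.const_mul (μ / 2)
  refine this.congr_deriv ?_
  rw [real_inner_comm (b + t • v) v]
  ring

lemma grady_strong_mono (hf : ContDiff ℝ 2 f) (hμ : 0 < μ) {x : En n}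
    (hconc : StrongConcaveOn Set.univ μ (fun y => f (pair x y))) (a b : En m) :
    ⟪grady f x a - grady f x b, a - b⟫ ≤ -μ * ‖a - b‖ ^ 2 := by
  set v := a - b with hv
  -- ψ = φ + μ/2 ‖·‖² is concave, so χ = -ψ is convex
  have hψ : ConcaveOn ℝ Set.univ fun y => f (pair x y) + μ / 2 * ‖y‖ ^ 2 :=
    (strongConcaveOn_iff_convex).mp hconc
  have hχ : ConvexOn ℝ Set.univ fun y : En m => -(f (pair x y) + μ / 2 * ‖y‖ ^ 2) := hψ.neg
  -- 1-D restriction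
  set h : ℝ → ℝ := fun t => -(f (pair x (b + t • v)) + μ / 2 * ‖b + t • v‖ ^ 2) with hh
  have hline : ∀ t : ℝ, (AffineMap.lineMap b a : ℝ →ᵃ[ℝ] En m) t = b + t • v := by
    intro t; simp [AffineMap.lineMap_apply, hv]; abel
  have hconv : ConvexOn ℝ Set.univ h := by
    have := hχ.comp_affineMap (AffineMap.lineMap b a : ℝ →ᵃ[ℝ] En m)
    have hs : (AffineMap.lineMap b a : ℝ →ᵃ[ℝ] En m) ⁻¹' Set.univ = Set.univ := by simp
    rw [hs] at this
    have heq : h = (fun y : En m => -(f (pair x y) + μ / 2 * ‖y‖ ^ 2)) ∘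
        (AffineMap.lineMap b a : ℝ →ᵃ[ℝ] En m) := by
      funext t
      simp [hh, Function.comp, hline t]
    rw [heq]; exact this
  have hd : ∀ t : ℝ, HasDerivAt h
      (-(⟪grady f x (b + t • v), v⟫ + μ * ⟪b + t • v, v⟫)) t := by
    intro t
    exact ((phi_line_hasDerivAt hf x b v t).add (normsq_line_hasDerivAt μ b v t)).neg
  have h01 : (0:ℝ) < 1 := one_pos
  have hle1 : -(⟪grady f x (b + (0:ℝ) • v), v⟫ + μ * ⟪b + (0:ℝ) • v, v⟫) ≤ slope h 0 1 :=
    hconv.le_slope_of_hasDerivAt (Set.mem_univ _) (Set.mem_univ _) h01 (hd 0)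
  have hle2 : slope h 0 1 ≤ -(⟪grady f x (b + (1:ℝ) • v), v⟫ + μ * ⟪b + (1:ℝ) • v, v⟫) :=
    hconv.slope_le_of_hasDerivAt (Set.mem_univ _) (Set.mem_univ _) h01 (hd 1)
  have key := hle1.trans hle2
  have e0 : b + (0:ℝ) • v = b := by simp
  have e1 : b + (1:ℝ) • v = a := by simp [hv]
  rw [e0, e1] at key
  have : ⟪grady f x a, v⟫ + μ * ⟪a, v⟫ ≤ ⟪grady f x b, v⟫ + μ * ⟪b, v⟫ := by linarith
  have hinner : ⟪a, v⟫ - ⟪b, v⟫ = ‖v‖ ^ 2 := by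
    rw [← inner_sub_left, ← hv, real_inner_self_eq_norm_sq]
  rw [inner_sub_left]
  nlinarith [this, hinner]

end Mono

section Quad
variable {n m : ℕ} {f : WithLp 2 (En n × En m) → ℝ} {μ : ℝ}

lemma Hyy_quadform (hf : ContDiff ℝ 2 f) (hμ : 0 < μ) {x : En n}
    (hconc : StrongConcaveOn Set.univ μ (fun y => f (pair x y))) (y : En m) (u : En m) :
    ⟪Hyy f x y u, u⟫ ≤ -μ * ‖u‖ ^ 2 := by
  -- q t = ⟪grady f x (y + t u), u⟫ has derivative ⟪Hyy u, u⟫ at 0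
  have hB : HasFDerivAt (fun y' => grady f x y') (Hyy f x y) y := by
    have := hasFDerivAt_Hyy hf x y
    rwa [← Hyy_eq hf x y] at this
  have hB' : HasFDerivAt (fun y' => grady f x y') (Hyy f x y) (y + (0:ℝ) • u) := by
    simpa using hB
  have hcomp : HasDerivAt (fun t : ℝ => grady f x (y + t • u)) (Hyy f x y u) 0 := by
    have := hB'.comp_hasDerivAt 0 (line_hasDerivAt y u 0)
    exact this
  have hq : HasDerivAt (fun t : ℝ => ⟪grady f x (y + t • u), u⟫) ⟪Hyy f x y u, u⟫ 0 := by
    have := HasDerivAt.inner ℝ hcomp (hasDerivAt_const (0:ℝ) u)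
    simpa using this
  set q : ℝ → ℝ := fun t => ⟪grady f x (y + t • u), u⟫ with hqdef
  have htend : Filter.Tendsto (slope q 0) (𝓝[>] (0:ℝ)) (𝓝 ⟪Hyy f x y u, u⟫) :=
    (hasDerivAt_iff_tendsto_slope.mp hq).mono_left
      (nhdsWithin_mono 0 (fun t ht => ne_of_gt ht))
  refine le_of_tendsto htend ?_
  filter_upwards [self_mem_nhdsWithin] with t ht
  have ht' : (0:ℝ) < t := ht
  have hmono := grady_strong_mono hf hμ hconc (y + t • u) y
  have he : y + t • u - y = t • u := by abel
  rw [he] at hmono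
  have hs : ⟪grady f x (y + t • u) - grady f x y, t • u⟫
      = t * ⟪grady f x (y + t • u), u⟫ - t * ⟪grady f x y, u⟫ := by
    rw [real_inner_smul_right, inner_sub_left]; ring
  rw [hs, norm_smul] at hmono
  have hslope : slope q 0 t = (q t - q 0) / t := by
    rw [slope_def_field]; simp
  rw [hslope]
  simp only [hqdef, zero_smul, add_zero]
  rw [div_le_iff₀ ht']
  have habs : ‖t‖ = t := by rw [Real.norm_eq_abs, abs_of_pos ht']
  rw [habs] at hmono
  nlinarith [hmono, norm_nonneg u, sq_nonneg t]

lemma Hyy_lower (hf : ContDiff ℝ 2 f) (hμ : 0 < μ) {x : En n}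
    (hconc : StrongConcaveOn Set.univ μ (fun y => f (pair x y))) (y : En m) (u : En m) :
    μ * ‖u‖ ≤ ‖Hyy f x y u‖ := by
  rcases eq_or_ne u 0 with rfl | hu
  · simp
  have hq := Hyy_quadform hf hμ hconc y u
  have h1 : μ * ‖u‖ ^ 2 ≤ -⟪Hyy f x y u, u⟫ := by linarith
  have h2 : -⟪Hyy f x y u, u⟫ ≤ ‖Hyy f x y u‖ * ‖u‖ := by
    have := abs_real_inner_le_norm (Hyy f x y u) u
    have := neg_abs_le ⟪Hyy f x y u, u⟫
    linarith [abs_real_inner_le_norm (Hyy f x y u) u]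
  have hu' : 0 < ‖u‖ := norm_pos_iff.mpr hu
  nlinarith

/-- The `ContinuousLinearEquiv` version of `Hyy`. -/
lemma Hyy_isUnit (hf : ContDiff ℝ 2 f) (hμ : 0 < μ) {x : En n}
    (hconc : StrongConcaveOn Set.univ μ (fun y => f (pair x y))) (y : En m) :
    ∃ e : En m ≃L[ℝ] En m, (e : En m →L[ℝ] En m) = Hyy f x y := by
  have hinj : Function.Injective (Hyy f x y) := by
    intro u v huv
    have h := Hyy_lower hf hμ hconc y (u - v)
    rw [map_sub, huv, sub_self, norm_zero] at h
    have : ‖u - v‖ ≤ 0 := by nlinarith [norm_nonneg (u - v)]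
    have := le_antisymm this (norm_nonneg _)
    rwa [norm_eq_zero, sub_eq_zero] at this
  have hbij : Function.Bijective (Hyy f x y) :=
    ⟨hinj, (LinearMap.injective_iff_surjective (f := (Hyy f x y : En m →ₗ[ℝ] En m))).mp hinj⟩
  let e₀ : En m ≃ₗ[ℝ] En m := LinearEquiv.ofBijective (Hyy f x y : En m →ₗ[ℝ] En m) hbij
  exact ⟨e₀.toContinuousLinearEquiv, by ext u; rfl⟩

end Quad

section Inv
variable {n m : ℕ} {f : WithLp 2 (En n × En m) → ℝ} {μ : ℝ}

lemma Hyy_inverse_spec (hf : ContDiff ℝ 2 f) (hμ : 0 < μ) {x : En n}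
    (hconc : StrongConcaveOn Set.univ μ (fun y => f (pair x y))) (y : En m) :
    (Hyy f x y).comp (Hyy f x y).inverse = ContinuousLinearMap.id ℝ (En m)
  ∧ (Hyy f x y).inverse.comp (Hyy f x y) = ContinuousLinearMap.id ℝ (En m)
  ∧ ‖(Hyy f x y).inverse‖ ≤ μ⁻¹ := by
  obtain ⟨e, he⟩ := Hyy_isUnit hf hμ hconc y
  have hinv : (Hyy f x y).inverse = (e.symm : En m →L[ℝ] En m) := by
    rw [← he, ContinuousLinearMap.inverse_equiv]
  refine ⟨?_, ?_, ?_⟩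
  · rw [hinv, ← he]; ext u
    simp
  · rw [hinv, ← he]; ext u
    simp
  · rw [hinv]
    refine ContinuousLinearMap.opNorm_le_bound _ (by positivity) fun w => ?_
    have h1 := Hyy_lower hf hμ hconc y (e.symm w)
    have h2 : Hyy f x y (e.symm w) = w := by rw [← he]; simp
    rw [h2] at h1
    rw [inv_mul_eq_div, le_div_iff₀ hμ]
    rw [mul_comm] at h1
    exact h1

lemma inverse_sub_inverse {B₁ B₂ : En m →L[ℝ] En m}
    {T₁ T₂ : En m →L[ℝ] En m}
    (h1 : T₁.comp B₁ = ContinuousLinearMap.id ℝ (En m))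
    (h2 : B₂.comp T₂ = ContinuousLinearMap.id ℝ (En m)) :
    T₁ - T₂ = (T₁.comp (B₂ - B₁)).comp T₂ := by
  rw [ContinuousLinearMap.comp_sub, ContinuousLinearMap.sub_comp,
    ContinuousLinearMap.comp_assoc, h2, h1]
  simp

end Inv



/-- The map `(x,y) ↦ H(x,y) = ∇²ₓₓf − ∇²ₓ_yf (∇²_y_yf)⁻¹ ∇²_yₓf` is Lipschitz
continuous in operator norm with constant `L_H = ρ(1+κ)²`, and `‖H(x,y)‖ ≤ (1+κ)ℓ` for all
`(x,y)`, where `κ = ℓ/μ`. -/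
theorem statement2 {n m : ℕ} (f : WithLp 2 (En n × En m) → ℝ) (ℓ μ ρ : ℝ)
    (hμ : 0 < μ) (hμℓ : μ ≤ ℓ)
    (hf : ContDiff ℝ 2 f)
    (hlip : ∀ p q : WithLp 2 (En n × En m), ‖gradient f p - gradient f q‖ ≤ ℓ * ‖p - q‖)
    (hxx : ∀ (x x' : En n) (y y' : En m),
      ‖Hxx f x y - Hxx f x' y'‖ ≤ ρ * ‖pair x y - pair x' y'‖)
    (hxy : ∀ (x x' : En n) (y y' : En m),
      ‖Hxy f x y - Hxy f x' y'‖ ≤ ρ * ‖pair x y - pair x' y'‖)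
    (hyx : ∀ (x x' : En n) (y y' : En m),
      ‖Hyx f x y - Hyx f x' y'‖ ≤ ρ * ‖pair x y - pair x' y'‖)
    (hyy : ∀ (x x' : En n) (y y' : En m),
      ‖Hyy f x y - Hyy f x' y'‖ ≤ ρ * ‖pair x y - pair x' y'‖)
    (hconc : ∀ x : En n, StrongConcaveOn Set.univ μ (fun y => f (pair x y))) :
    (∀ (x x' : En n) (y y' : En m),
      ‖Hmat f x y - Hmat f x' y'‖ ≤ ρ * (1 + ℓ / μ) ^ 2 * ‖pair x y - pair x' y'‖) ∧
    (∀ (x : En n) (y : En m), ‖Hmat f x y‖ ≤ (1 + ℓ / μ) * ℓ) := by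
  have hℓ0 : 0 ≤ ℓ := le_trans hμ.le hμℓ
  have hμ0 : (0:ℝ) < μ⁻¹ := by positivity
  constructor
  · -- Lipschitz part
    intro x x' y y'
    obtain ⟨hBT₁, hTB₁, hT₁⟩ := Hyy_inverse_spec hf hμ (hconc x) y
    obtain ⟨hBT₂, hTB₂, hT₂⟩ := Hyy_inverse_spec hf hμ (hconc x') y'
    set T₁ := (Hyy f x y).inverse with hT₁def
    set T₂ := (Hyy f x' y').inverse with hT₂def
    set d := ‖pair x y - pair x' y'‖ with hd
    have hρd : 0 ≤ ρ * d := le_trans (norm_nonneg _) (hxx x x' y y')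
    -- difference of inverses
    have hTdiff : T₁ - T₂ = (T₁.comp (Hyy f x' y' - Hyy f x y)).comp T₂ :=
      inverse_sub_inverse hTB₁ hBT₂
    have hΔB : ‖Hyy f x' y' - Hyy f x y‖ ≤ ρ * d := by
      have := hyy x' x y' y
      rwa [norm_sub_rev (pair x' y'), ← hd] at this
    have hTd : ‖T₁ - T₂‖ ≤ μ⁻¹ * (ρ * d) * μ⁻¹ := by
      rw [hTdiff]
      calc ‖(T₁.comp (Hyy f x' y' - Hyy f x y)).comp T₂‖
          ≤ ‖T₁.comp (Hyy f x' y' - Hyy f x y)‖ * ‖T₂‖ := ContinuousLinearMap.opNorm_comp_le _ _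
        _ ≤ (‖T₁‖ * ‖Hyy f x' y' - Hyy f x y‖) * ‖T₂‖ := by
            gcongr; exact ContinuousLinearMap.opNorm_comp_le _ _
        _ ≤ (μ⁻¹ * (ρ * d)) * μ⁻¹ := by
            gcongr <;> first | exact hT₁ | exact hΔB | exact hT₂ | positivity
    -- key decomposition
    have key : Hmat f x y - Hmat f x' y' =
        (Hxx f x y - Hxx f x' y')
        - ((Hxy f x y - Hxy f x' y').comp (T₁.comp (Hyx f x y))
           + ((Hxy f x' y').comp (T₁ - T₂)).comp (Hyx f x y)
           + ((Hxy f x' y').comp T₂).comp (Hyx f x y - Hyx f x' y')) := by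
      simp only [Hmat, ← hT₁def, ← hT₂def, ContinuousLinearMap.sub_comp,
        ContinuousLinearMap.comp_sub, ContinuousLinearMap.comp_assoc]
      abel
    have b1 : ‖(Hxy f x y - Hxy f x' y').comp (T₁.comp (Hyx f x y))‖
        ≤ (ρ * d) * (μ⁻¹ * ℓ) := by
      calc ‖(Hxy f x y - Hxy f x' y').comp (T₁.comp (Hyx f x y))‖
          ≤ ‖Hxy f x y - Hxy f x' y'‖ * ‖T₁.comp (Hyx f x y)‖ :=
            ContinuousLinearMap.opNorm_comp_le _ _
        _ ≤ ‖Hxy f x y - Hxy f x' y'‖ * (‖T₁‖ * ‖Hyx f x y‖) := by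
            gcongr; exact ContinuousLinearMap.opNorm_comp_le _ _
        _ ≤ (ρ * d) * (μ⁻¹ * ℓ) := by
            gcongr <;> first | exact hxy x x' y y' | exact hT₁ | exact norm_Hyx_le hf hℓ0 hlip x y | positivity
    have b2 : ‖((Hxy f x' y').comp (T₁ - T₂)).comp (Hyx f x y)‖
        ≤ (ℓ * (μ⁻¹ * (ρ * d) * μ⁻¹)) * ℓ := by
      calc ‖((Hxy f x' y').comp (T₁ - T₂)).comp (Hyx f x y)‖
          ≤ ‖(Hxy f x' y').comp (T₁ - T₂)‖ * ‖Hyx f x y‖ :=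
            ContinuousLinearMap.opNorm_comp_le _ _
        _ ≤ (‖Hxy f x' y'‖ * ‖T₁ - T₂‖) * ‖Hyx f x y‖ := by
            gcongr; exact ContinuousLinearMap.opNorm_comp_le _ _
        _ ≤ (ℓ * (μ⁻¹ * (ρ * d) * μ⁻¹)) * ℓ := by
            gcongr <;> first | exact norm_Hxy_le hf hℓ0 hlip x' y' | exact hTd | exact norm_Hyx_le hf hℓ0 hlip x y | positivity
    have b3 : ‖((Hxy f x' y').comp T₂).comp (Hyx f x y - Hyx f x' y')‖
        ≤ (ℓ * μ⁻¹) * (ρ * d) := by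
      calc ‖((Hxy f x' y').comp T₂).comp (Hyx f x y - Hyx f x' y')‖
          ≤ ‖(Hxy f x' y').comp T₂‖ * ‖Hyx f x y - Hyx f x' y'‖ :=
            ContinuousLinearMap.opNorm_comp_le _ _
        _ ≤ (‖Hxy f x' y'‖ * ‖T₂‖) * ‖Hyx f x y - Hyx f x' y'‖ := by
            gcongr; exact ContinuousLinearMap.opNorm_comp_le _ _
        _ ≤ (ℓ * μ⁻¹) * (ρ * d) := by
            gcongr <;> first | exact norm_Hxy_le hf hℓ0 hlip x' y' | exact hT₂ | exact hyx x x' y y' | positivity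
    have tri : ‖Hmat f x y - Hmat f x' y'‖ ≤
        ρ * d + ((ρ * d) * (μ⁻¹ * ℓ) + (ℓ * (μ⁻¹ * (ρ * d) * μ⁻¹)) * ℓ + (ℓ * μ⁻¹) * (ρ * d)) := by
      rw [key]
      refine (norm_sub_le _ _).trans ?_
      refine add_le_add (hxx x x' y y') ?_
      refine (norm_add_le _ _).trans ?_
      refine add_le_add ((norm_add_le _ _).trans (add_le_add b1 b2)) b3
    refine tri.trans (le_of_eq ?_)
    field_simp
    ring
  · -- norm bound part
    intro x y
    obtain ⟨hBT, hTB, hT⟩ := Hyy_inverse_spec hf hμ (hconc x) y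
    rw [Hmat]
    have hb : ‖(Hxy f x y).comp (((Hyy f x y).inverse).comp (Hyx f x y))‖
        ≤ ℓ * (μ⁻¹ * ℓ) := by
      calc ‖(Hxy f x y).comp (((Hyy f x y).inverse).comp (Hyx f x y))‖
          ≤ ‖Hxy f x y‖ * ‖((Hyy f x y).inverse).comp (Hyx f x y)‖ :=
            ContinuousLinearMap.opNorm_comp_le _ _
        _ ≤ ‖Hxy f x y‖ * (‖(Hyy f x y).inverse‖ * ‖Hyx f x y‖) := by
            gcongr; exact ContinuousLinearMap.opNorm_comp_le _ _
        _ ≤ ℓ * (μ⁻¹ * ℓ) := by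
            gcongr <;> first | exact norm_Hxy_le hf hℓ0 hlip x y | exact hT | exact norm_Hyx_le hf hℓ0 hlip x y | positivity
    refine (norm_sub_le _ _).trans ?_
    have h1 : ‖Hxx f x y‖ ≤ ℓ := norm_Hxx_le hf hℓ0 hlip x y
    have : ℓ + ℓ * (μ⁻¹ * ℓ) = (1 + ℓ / μ) * ℓ := by field_simp
    linarith [hb, h1]
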